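/- Let C be a small category, Y a simplicial set, and δ a nonsingular twisted structure on C with coefficients in Y. Then the mixed simplicial identities hold for the twisted faces and degeneracies on {Y_n × N(C)_n}: for 0 ≤ i < j ≤ n, d_i^δ ∘ s_j^δ = s_{j−1}^δ ∘ d_i^δ; for i = j and for i = j+1 (0 ≤ j ≤ n), d_i^δ ∘ s_j^δ is the identity of Y_n × N(C)_n; and for j+1 < i ≤ n+1, d_i^δ ∘ s_j^δ = s_j^δ ∘ d_{i−1}^δ. -/

import Mathlib

open CategoryTheory Simplicial

universe u

/-- The `i`-th vertex of an `n`-simplex of the nerve of a small category `C`. -/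
def nerveVertex {C : Type u} [SmallCategory C] {n : ℕ}
    (σ : nerve C _⦋n⦌) (i : Fin (n + 1)) : C :=
  σ.obj i

/-- The twisted face map `d_i^δ(y, σ) = (δ_{v_i}(d_i y), d_i σ)`. -/
def twistedFace {C : Type u} [SmallCategory C] (Y : SSet.{u})
    (δ : C → (Y ≅ Y)) {n : ℕ} (i : Fin (n + 2)) :
    Y _⦋n + 1⦌ × nerve C _⦋n + 1⦌ → Y _⦋n⦌ × nerve C _⦋n⦌ :=
  fun p => ((δ (nerveVertex p.2 i)).hom.app (Opposite.op (SimplexCategory.mk n)) (Y.δ i p.1),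
    (nerve C).δ i p.2)

/-- The twisted degeneracy map `s_i^δ(y, σ) = (δ_{v_i}⁻¹(s_i y), s_i σ)`. -/
def twistedDegeneracy {C : Type u} [SmallCategory C] (Y : SSet.{u})
    (δ : C → (Y ≅ Y)) {n : ℕ} (i : Fin (n + 1)) :
    Y _⦋n⦌ × nerve C _⦋n⦌ → Y _⦋n + 1⦌ × nerve C _⦋n + 1⦌ :=
  fun p => ((δ (nerveVertex p.2 i)).inv.app (Opposite.op (SimplexCategory.mk (n + 1)))
      (Y.σ i p.1),
    (nerve C).σ i p.2)

lemma finA1 {n : ℕ} (i : Fin (n+2)) (j : Fin (n+1)) (h : i ≤ j.castSucc) :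
    (j.succ).predAbove i.castSucc = i := by
  rw [Fin.predAbove_of_le_castSucc _ _
    (by exact Fin.castSucc_le_castSucc_iff.mpr (h.trans (Fin.castSucc_le_succ j))),
    Fin.castPred_castSucc]

lemma finA2 {n : ℕ} (i : Fin (n+2)) (j : Fin (n+1)) (h : i ≤ j.castSucc) :
    i.succAbove j = j.succ := Fin.succAbove_of_le_castSucc _ _ h

lemma finA3 {n : ℕ} (j : Fin (n+1)) : j.predAbove j.castSucc = j := by
  rw [Fin.predAbove_of_le_castSucc _ _ le_rfl, Fin.castPred_castSucc]

lemma finA4 {n : ℕ} (j : Fin (n+1)) : j.predAbove j.succ = j :=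
  Fin.predAbove_succ_of_le _ _ le_rfl

lemma finA5 {n : ℕ} (i : Fin (n+2)) (j : Fin (n+1)) (h : j.castSucc < i) :
    (j.castSucc).predAbove i.succ = i := by
  rw [Fin.predAbove_of_castSucc_lt _ _
    (by exact (Fin.castSucc_lt_castSucc_iff.mpr h).trans (Fin.castSucc_lt_succ (i := i))),
    Fin.pred_succ]

lemma finA6 {n : ℕ} (i : Fin (n+2)) (j : Fin (n+1)) (h : j.castSucc < i) :
    i.succAbove j = j.castSucc := Fin.succAbove_of_castSucc_lt _ _ h

lemma nerveVertex_δ {C : Type u} [SmallCategory C] {n : ℕ} (σ : nerve C _⦋n+1⦌)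
    (i : Fin (n+2)) (k : Fin (n+1)) :
    nerveVertex ((nerve C).δ i σ) k = nerveVertex σ (i.succAbove k) := rfl

lemma nerveVertex_σ {C : Type u} [SmallCategory C] {n : ℕ} (σ : nerve C _⦋n⦌)
    (i : Fin (n+1)) (k : Fin (n+2)) :
    nerveVertex ((nerve C).σ i σ) k = nerveVertex σ (i.predAbove k) := rfl

lemma nat_δ {Y : SSet.{u}} (η : Y ⟶ Y) {n : ℕ} (i : Fin (n+2)) (y : Y _⦋n+1⦌) :
    η.app _ (Y.δ i y) = Y.δ i (η.app _ y) := ConcreteCategory.congr_hom (η.naturality _) y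

lemma nat_σ {Y : SSet.{u}} (η : Y ⟶ Y) {n : ℕ} (i : Fin (n+1)) (y : Y _⦋n⦌) :
    η.app _ (Y.σ i y) = Y.σ i (η.app _ y) := ConcreteCategory.congr_hom (η.naturality _) y

lemma comm_inv_hom {Y : SSet.{u}} (e f : Y ≅ Y) (h : e.hom ≫ f.hom = f.hom ≫ e.hom)
    (m : SimplexCategoryᵒᵖ) (y : Y.obj m) :
    f.hom.app m (e.inv.app m y) = e.inv.app m (f.hom.app m y) := by
  have h2 : f.hom ≫ e.inv = e.inv ≫ f.hom := by
    rw [Iso.comp_inv_eq, Category.assoc, ← h, Iso.inv_hom_id_assoc]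
  have h3 := types_congr_hom (congr_app h2 m) y
  simpa using h3.symm

lemma inv_hom_app {Y : SSet.{u}} (e : Y ≅ Y) (m : SimplexCategoryᵒᵖ) (y : Y.obj m) :
    e.hom.app m (e.inv.app m y) = y := by
  have := types_congr_hom (congr_app e.inv_hom_id m) y
  simpa using this

lemma elem_δσ_of_le (X : SSet.{u}) {n : ℕ} {i : Fin (n+2)} {j : Fin (n+1)}
    (h : i ≤ j.castSucc) (y : X _⦋n+1⦌) :
    X.δ i.castSucc (X.σ j.succ y) = X.σ j (X.δ i y) := by
  have := types_congr_hom (SimplicialObject.δ_comp_σ_of_le X h) y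
  simpa using this

lemma elem_δσ_self (X : SSet.{u}) {n : ℕ} {i : Fin (n+1)} (y : X _⦋n⦌) :
    X.δ i.castSucc (X.σ i y) = y := by
  have := types_congr_hom (SimplicialObject.δ_comp_σ_self X (i := i)) y
  simpa using this

lemma elem_δσ_succ (X : SSet.{u}) {n : ℕ} {i : Fin (n+1)} (y : X _⦋n⦌) :
    X.δ i.succ (X.σ i y) = y := by
  have := types_congr_hom (SimplicialObject.δ_comp_σ_succ X (i := i)) y
  simpa using this

lemma elem_δσ_of_gt (X : SSet.{u}) {n : ℕ} {i : Fin (n+2)} {j : Fin (n+1)}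
    (h : j.castSucc < i) (y : X _⦋n+1⦌) :
    X.δ i.succ (X.σ j.castSucc y) = X.σ j (X.δ i y) := by
  have := types_congr_hom (SimplicialObject.δ_comp_σ_of_gt X h) y
  simpa using this

/-- for a nonsingular twisted structure `δ` on a small category `C` with
coefficients in a simplicial set `Y`, the mixed simplicial identities hold for the twisted
faces and degeneracies on `{Y_n × N(C)_n}`:
* `d_i^δ ∘ s_j^δ = s_{j−1}^δ ∘ d_i^δ` for `0 ≤ i < j ≤ n`,
* `d_j^δ ∘ s_j^δ = id` and `d_{j+1}^δ ∘ s_j^δ = id`,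
* `d_i^δ ∘ s_j^δ = s_j^δ ∘ d_{i−1}^δ` for `j + 1 < i ≤ n + 1`. -/
theorem twisted_mixed_simplicial_identities {C : Type u} [SmallCategory C] (Y : SSet.{u})
    (δ : C → (Y ≅ Y))
    (hcomm : ∀ v w : C, (Nonempty (v ⟶ w) ∨ Nonempty (w ⟶ v)) →
      (δ v).hom ≫ (δ w).hom = (δ w).hom ≫ (δ v).hom) :
    (∀ (n : ℕ) (i : Fin (n + 2)) (j : Fin (n + 1)), i ≤ j.castSucc →
      (twistedFace Y δ i.castSucc) ∘ (twistedDegeneracy Y δ j.succ) =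
        (twistedDegeneracy Y δ j) ∘ (twistedFace Y δ i)) ∧
    (∀ (n : ℕ) (j : Fin (n + 1)),
      (twistedFace Y δ j.castSucc) ∘ (twistedDegeneracy Y δ j) = id) ∧
    (∀ (n : ℕ) (j : Fin (n + 1)),
      (twistedFace Y δ j.succ) ∘ (twistedDegeneracy Y δ j) = id) ∧
    (∀ (n : ℕ) (i : Fin (n + 2)) (j : Fin (n + 1)), j.castSucc < i →
      (twistedFace Y δ i.succ) ∘ (twistedDegeneracy Y δ j.castSucc) =
        (twistedDegeneracy Y δ j) ∘ (twistedFace Y δ i)) := by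
  refine ⟨?_, ?_, ?_, ?_⟩
  · intro n i j h
    funext p
    obtain ⟨y, σ⟩ := p
    have hv : Nonempty (nerveVertex σ i ⟶ nerveVertex σ j.succ) :=
      ⟨σ.map (homOfLE (h.trans (Fin.castSucc_le_succ j)))⟩
    refine Prod.ext ?_ ?_
    · show (δ (nerveVertex ((nerve C).σ j.succ σ) i.castSucc)).hom.app _
        (Y.δ i.castSucc ((δ (nerveVertex σ j.succ)).inv.app _ (Y.σ j.succ y)))
        = (δ (nerveVertex ((nerve C).δ i σ) j)).inv.app _
        (Y.σ j ((δ (nerveVertex σ i)).hom.app _ (Y.δ i y)))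
      rw [nerveVertex_σ, nerveVertex_δ, finA1 _ _ h, finA2 _ _ h,
        ← nat_δ ((δ (nerveVertex σ j.succ)).inv), ← nat_σ ((δ (nerveVertex σ i)).hom),
        elem_δσ_of_le Y h]
      exact comm_inv_hom _ _ (hcomm _ _ (Or.inr hv)) _ _
    · exact elem_δσ_of_le (nerve C) h σ
  · intro n j
    funext p
    obtain ⟨y, σ⟩ := p
    refine Prod.ext ?_ ?_
    · show (δ (nerveVertex ((nerve C).σ j σ) j.castSucc)).hom.app _
        (Y.δ j.castSucc ((δ (nerveVertex σ j)).inv.app _ (Y.σ j y))) = y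
      rw [nerveVertex_σ, finA3, ← nat_δ ((δ (nerveVertex σ j)).inv), elem_δσ_self Y]
      exact inv_hom_app _ _ _
    · exact elem_δσ_self (nerve C) σ
  · intro n j
    funext p
    obtain ⟨y, σ⟩ := p
    refine Prod.ext ?_ ?_
    · show (δ (nerveVertex ((nerve C).σ j σ) j.succ)).hom.app _
        (Y.δ j.succ ((δ (nerveVertex σ j)).inv.app _ (Y.σ j y))) = y
      rw [nerveVertex_σ, finA4, ← nat_δ ((δ (nerveVertex σ j)).inv), elem_δσ_succ Y]
      exact inv_hom_app _ _ _
    · exact elem_δσ_succ (nerve C) σ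
  · intro n i j h
    funext p
    obtain ⟨y, σ⟩ := p
    have hv : Nonempty (nerveVertex σ j.castSucc ⟶ nerveVertex σ i) :=
      ⟨σ.map (homOfLE h.le)⟩
    refine Prod.ext ?_ ?_
    · show (δ (nerveVertex ((nerve C).σ j.castSucc σ) i.succ)).hom.app _
        (Y.δ i.succ ((δ (nerveVertex σ j.castSucc)).inv.app _ (Y.σ j.castSucc y)))
        = (δ (nerveVertex ((nerve C).δ i σ) j)).inv.app _
        (Y.σ j ((δ (nerveVertex σ i)).hom.app _ (Y.δ i y)))
      rw [nerveVertex_σ, nerveVertex_δ, finA5 _ _ h, finA6 _ _ h,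
        ← nat_δ ((δ (nerveVertex σ j.castSucc)).inv), ← nat_σ ((δ (nerveVertex σ i)).hom),
        elem_δσ_of_gt Y h]
      exact comm_inv_hom _ _ (hcomm _ _ (Or.inl hv)) _ _
    · exact elem_δσ_of_gt (nerve C) h σ
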